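/- Let N ≥ 4 be an even integer and a, b, c ∈ ℂ. Let T be the zero-field six-vertex transfer matrix on N sites, and let ψ = Σ_{l=1}^{N} (−1)^l |l, l+1⟩, where position indices are taken modulo N (so the l = N term is (−1)^N |N, 1⟩). Then T·ψ = Λ·ψ with Λ = a²b²(a^{N−4} + b^{N−4}) − c²(a^{N−2} + b^{N−2}). -/

import Mathlib

/-- The vertex weight matrices of the zero-field six-vertex model
(`ω₁ = ω₂ = a`, `ω₃ = ω₄ = b`, `ω₅ = ω₆ = c`), acting on the horizontal edge space.
`true` encodes an up arrow (`σ = +1`) and `false` a down arrow (`σ = −1`).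
(The displayed `R₋₊` in the source has a typo `[[c,0],[0,0]]`; the ice-rule
consistent weight matrix is `[[0,0],[c,0]]`, used here.) -/
noncomputable def Rvertex (a b c : ℂ) : Bool → Bool → Matrix (Fin 2) (Fin 2) ℂ
  | true,  true  => !![a, 0; 0, b]
  | true,  false => !![0, c; 0, 0]
  | false, true  => !![0, 0; c, 0]
  | false, false => !![b, 0; 0, a]

/-- The zero-field six-vertex transfer matrix on `N` sites with periodic boundary
conditions: `T σ σ' = trace (R_{σ₁σ'₁} ⋯ R_{σ_N σ'_N})`. -/
noncomputable def transfer (N : ℕ) (a b c : ℂ) :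
    Matrix (Fin N → Bool) (Fin N → Bool) ℂ := fun σ σ' =>
  Matrix.trace (((List.finRange N).map fun i => Rvertex a b c (σ i) (σ' i)).prod)

/-- The standard basis vector `|x₁,…,x_n⟩` of `ℂ^(2^N)` indexed by the arrow
configuration with down arrows (`false`) exactly at the positions in `S`. -/
noncomputable def ket {N : ℕ} (S : Finset (Fin N)) : (Fin N → Bool) → ℂ :=
  fun σ => if σ = fun x => decide (x ∉ S) then 1 else 0



namespace SixV

variable (a b c : ℂ)

/-- product of `R(s, true)` over a list of bools -/
noncomputable def prodA (L : List Bool) : Matrix (Fin 2) (Fin 2) ℂ :=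
  (L.map fun s => Rvertex a b c s true).prod

@[simp] lemma prodA_nil : prodA a b c [] = 1 := rfl

@[simp] lemma prodA_cons (s : Bool) (L : List Bool) :
    prodA a b c (s :: L) = Rvertex a b c s true * prodA a b c L := by
  simp [prodA]

lemma prodA_append (L₁ L₂ : List Bool) :
    prodA a b c (L₁ ++ L₂) = prodA a b c L₁ * prodA a b c L₂ := by
  simp [prodA]

lemma prodA_all_true (L : List Bool) (h : ∀ x ∈ L, x = true) :
    prodA a b c L = !![a ^ L.length, 0; 0, b ^ L.length] := by
  induction L with
  | nil => simp [Matrix.one_fin_two]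
  | cons s L ih =>
      have hs : s = true := h s (by simp)
      rw [prodA_cons, ih (fun x hx => h x (by simp [hx])), hs]
      show !![a, 0; 0, b] * _ = _
      rw [Matrix.mul_fin_two]
      norm_num [pow_succ]
      ring_nf
      trivial

lemma prodA_low (L : List Bool) (h : ∃ x ∈ L, x = false) :
    ∃ z : ℂ, prodA a b c L = !![0, 0; z, 0] := by
  induction L with
  | nil => simp at h
  | cons s L ih =>
      rw [prodA_cons]
      cases s with
      | false =>
          have hR : Rvertex a b c false true = !![0,0;c,0] := rfl
          rw [hR]
          by_cases hL : ∀ x ∈ L, x = true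
          · refine ⟨c * a ^ L.length, ?_⟩
            rw [prodA_all_true a b c L hL, Matrix.mul_fin_two]; norm_num
          · push_neg at hL
            obtain ⟨x, hx, hx'⟩ := hL
            obtain ⟨z, hz⟩ := ih ⟨x, hx, by simpa using hx'⟩
            refine ⟨0, ?_⟩
            rw [hz, Matrix.mul_fin_two]; norm_num
      | true =>
          have h' : ∃ x ∈ L, x = false := by
            obtain ⟨x, hx, hx'⟩ := h
            rcases List.mem_cons.mp hx with hx | hx
            · simp [hx'] at hx
            · exact ⟨x, hx, hx'⟩
          obtain ⟨z, hz⟩ := ih h'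
          refine ⟨b * z, ?_⟩
          have hR : Rvertex a b c true true = !![a,0;0,b] := rfl
          rw [hz, hR, Matrix.mul_fin_two]; norm_num

lemma prodA_one_false (L : List Bool) (j : ℕ) (hj : j < L.length)
    (h : ∀ i (h : i < L.length), L.get ⟨i, h⟩ = decide (i ≠ j)) :
    prodA a b c L = !![0, 0; c * b ^ j * a ^ (L.length - 1 - j), 0] := by
  induction L generalizing j with
  | nil => simp at hj
  | cons s L ih =>
      cases j with
      | zero =>
          have hs : s = false := by simpa using h 0 (by simp)
          have hL : ∀ x ∈ L, x = true := by
            intro x hx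
            obtain ⟨i, hi, rfl⟩ := List.mem_iff_get.mp hx
            have := h (i + 1) (by simpa using Nat.succ_lt_succ i.isLt)
            simpa using this
          rw [hs, prodA_cons, prodA_all_true a b c L hL]
          have hR : Rvertex a b c false true = !![0,0;c,0] := rfl
          rw [hR, Matrix.mul_fin_two]
          norm_num
      | succ j' =>
          have hs : s = true := by simpa using h 0 (by simp)
          have hj' : j' < L.length := by simpa using hj
          have hL : ∀ i (hi : i < L.length), L.get ⟨i, hi⟩ = decide (i ≠ j') := by
            intro i hi
            have := h (i + 1) (by simpa using Nat.succ_lt_succ hi)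
            simpa using this
          rw [hs, prodA_cons, ih j' hj' hL]
          have hR : Rvertex a b c true true = !![a,0;0,b] := rfl
          have hlen : L.length + 1 - 1 - (j' + 1) = L.length - 1 - j' := by omega
          rw [hR, Matrix.mul_fin_two]
          simp only [List.length_cons, hlen]
          norm_num [pow_succ]
          ring

lemma prodA_two_false (L : List Bool) (j₁ j₂ : ℕ) (h12 : j₁ < j₂) (h2 : j₂ < L.length)
    (hg1 : L.get ⟨j₁, lt_trans h12 h2⟩ = false) (hg2 : L.get ⟨j₂, h2⟩ = false) :
    prodA a b c L = 0 := by
  induction L generalizing j₁ j₂ with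
  | nil => simp at h2
  | cons s L ih =>
      cases j₁ with
      | zero =>
          have hs : s = false := by simpa using hg1
          obtain ⟨k, rfl⟩ : ∃ k, j₂ = k + 1 := ⟨j₂ - 1, by omega⟩
          have hk : k < L.length := by simpa using h2
          have hgk : L.get ⟨k, hk⟩ = false := by simpa using hg2
          obtain ⟨z, hz⟩ := prodA_low a b c L ⟨false, List.mem_iff_get.mpr ⟨⟨k, hk⟩, hgk⟩, rfl⟩
          rw [hs, prodA_cons, hz]
          have hR : Rvertex a b c false true = !![0,0;c,0] := rfl
          rw [hR, Matrix.mul_fin_two]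
          norm_num
          ext i j
          fin_cases i <;> fin_cases j <;> simp
      | succ i₁ =>
          obtain ⟨k, rfl⟩ : ∃ k, j₂ = k + 1 := ⟨j₂ - 1, by omega⟩
          have h12' : i₁ < k := by omega
          have hk : k < L.length := by simpa using h2
          have := ih i₁ k h12' hk (by simpa using hg1) (by simpa using hg2)
          rw [prodA_cons, this, mul_zero]

section TraceLemmas

lemma tr_tt (Q : Matrix (Fin 2) (Fin 2) ℂ) :
    (Rvertex a b c true false * (Rvertex a b c true false * Q)).trace = 0 := by
  rw [← mul_assoc]
  have : Rvertex a b c true false * Rvertex a b c true false = 0 := by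
    show !![0,c;0,0] * !![0,c;0,0] = 0
    rw [Matrix.mul_fin_two]
    norm_num
    ext i j; fin_cases i <;> fin_cases j <;> simp
  rw [this, zero_mul, Matrix.trace_zero]

lemma tr_ft_diag (p q : ℂ) :
    (Rvertex a b c false false * (Rvertex a b c true false * !![p,0;0,q])).trace = 0 := by
  have h1 : Rvertex a b c false false = !![b,0;0,a] := rfl
  have h2 : Rvertex a b c true false = !![0,c;0,0] := rfl
  rw [h1, h2]
  rw [Matrix.mul_fin_two, Matrix.mul_fin_two, Matrix.trace_fin_two]
  norm_num

lemma tr_ft_low (z : ℂ) :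
    (Rvertex a b c false false * (Rvertex a b c true false * !![0,0;z,0])).trace = b * c * z := by
  have h1 : Rvertex a b c false false = !![b,0;0,a] := rfl
  have h2 : Rvertex a b c true false = !![0,c;0,0] := rfl
  rw [h1, h2]
  rw [Matrix.mul_fin_two, Matrix.mul_fin_two, Matrix.trace_fin_two]
  norm_num
  ring

lemma tr_tf_diag (p q : ℂ) :
    (Rvertex a b c true false * (Rvertex a b c false false * !![p,0;0,q])).trace = 0 := by
  have h1 : Rvertex a b c false false = !![b,0;0,a] := rfl
  have h2 : Rvertex a b c true false = !![0,c;0,0] := rfl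
  rw [h1, h2]
  rw [Matrix.mul_fin_two, Matrix.mul_fin_two, Matrix.trace_fin_two]
  norm_num

lemma tr_tf_low (z : ℂ) :
    (Rvertex a b c true false * (Rvertex a b c false false * !![0,0;z,0])).trace = a * c * z := by
  have h1 : Rvertex a b c false false = !![b,0;0,a] := rfl
  have h2 : Rvertex a b c true false = !![0,c;0,0] := rfl
  rw [h1, h2]
  rw [Matrix.mul_fin_two, Matrix.mul_fin_two, Matrix.trace_fin_two]
  norm_num
  ring

lemma tr_ff_diag (p q : ℂ) :
    (Rvertex a b c false false * (Rvertex a b c false false * !![p,0;0,q])).trace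
      = b * b * p + a * a * q := by
  have h1 : Rvertex a b c false false = !![b,0;0,a] := rfl
  rw [h1]
  rw [Matrix.mul_fin_two, Matrix.mul_fin_two, Matrix.trace_fin_two]
  norm_num
  ring

lemma tr_ff_low (z : ℂ) :
    (Rvertex a b c false false * (Rvertex a b c false false * !![0,0;z,0])).trace = 0 := by
  have h1 : Rvertex a b c false false = !![b,0;0,a] := rfl
  rw [h1]
  rw [Matrix.mul_fin_two, Matrix.mul_fin_two, Matrix.trace_fin_two]
  norm_num

end TraceLemmas

end SixV

open Fin.NatCast

namespace SixV

section Master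

variable {N : ℕ} [NeZero N]

/-- configuration with down arrows exactly at `l, l+1` -/
def Chi (l : Fin N) : Fin N → Bool := fun i => decide (i ∉ ({l, l + 1} : Finset (Fin N)))

/-- the site `l + k` -/
def site (l : Fin N) (k : ℕ) : Fin N := ((l.val + k : ℕ) : Fin N)

lemma site_zero (l : Fin N) : site l 0 = l := by
  simp [site, Fin.cast_val_eq_self]

lemma site_cast (l : Fin N) (k : ℕ) : site l k = l + (k : Fin N) := by
  simp only [site, Nat.cast_add, Fin.cast_val_eq_self]

lemma site_one (l : Fin N) : site l 1 = l + 1 := by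
  rw [site_cast]; norm_num

lemma site_val (l : Fin N) (k : ℕ) : (site l k).val = (l.val + k) % N := by
  simp only [site, Fin.val_natCast]

lemma site_mod (l : Fin N) (k : ℕ) : site l (k % N) = site l k := by
  apply Fin.ext
  rw [site_val, site_val, Nat.add_mod_mod]

lemma site_inj (l : Fin N) {k k' : ℕ} (hk : k < N) (hk' : k' < N) :
    site l k = site l k' ↔ k = k' := by
  constructor
  · intro h
    have h' : (l.val + k) % N = (l.val + k') % N := by
      rw [← site_val, ← site_val, h]
    have := Nat.ModEq.add_left_cancel' l.val h'
    rwa [Nat.ModEq, Nat.mod_eq_of_lt hk, Nat.mod_eq_of_lt hk'] at this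
  · rintro rfl; rfl

lemma site_succ (l : Fin N) (k : ℕ) : site (l + 1) k = site l (1 + k) := by
  apply Fin.ext
  rw [site_val, site_val]
  have h1 : (l + 1).val = (l.val + 1 % N) % N := by
    rw [Fin.val_add]
    congr 1
  rw [h1, Nat.mod_add_mod]
  conv_lhs => rw [show l.val + 1 % N + k = (l.val + k) + 1 % N by omega]
  rw [Nat.add_mod_mod]
  congr 1
  omega

/-- the chain of vertical-arrow values at sites `l+2, …, l+N-1` -/
noncomputable def chain (σ : Fin N → Bool) (l : Fin N) : List Bool :=
  (List.range (N - 2)).map fun j => σ (site l (2 + j))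

lemma chain_length (σ : Fin N → Bool) (l : Fin N) : (chain σ l).length = N - 2 := by
  simp [chain]

lemma chain_get (σ : Fin N → Bool) (l : Fin N) (j : ℕ) (hj : j < (chain σ l).length) :
    (chain σ l).get ⟨j, hj⟩ = σ (site l (2 + j)) := by
  simp [chain]

lemma trace_rotate (X : List (Matrix (Fin 2) (Fin 2) ℂ)) (k : ℕ) (hk : k ≤ X.length) :
    ((X.rotate k).prod).trace = X.prod.trace := by
  rw [List.rotate_eq_drop_append_take hk, List.prod_append, Matrix.trace_mul_comm,
    ← List.prod_append, List.take_append_drop]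

lemma rot_map {α : Type*} (f : ℕ → α) (M k : ℕ) :
    ((List.range M).map f).rotate k = (List.range M).map fun j => f ((k + j) % M) := by
  apply List.ext_get
  · simp
  · intro n h1 h2
    rw [List.get_rotate]
    simp only [List.get_eq_getElem, List.getElem_map, List.getElem_range,
      List.length_map, List.length_range]
    rw [Nat.add_comm]

lemma finRange_map_eq (M : Fin N → Matrix (Fin 2) (Fin 2) ℂ) :
    (List.finRange N).map M = (List.range N).map fun j : ℕ => M (j : Fin N) := by
  apply List.ext_get
  · simp
  · intro n h1 h2
    simp only [List.get_eq_getElem, List.getElem_map, List.getElem_finRange,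
      List.getElem_range]
    have hn : n < N := by simpa using h1
    exact congrArg M (by apply Fin.ext; simp [Fin.val_natCast, Nat.mod_eq_of_lt hn])

lemma cast_mod (x : ℕ) : ((x % N : ℕ) : Fin N) = (x : Fin N) := by
  apply Fin.ext
  rw [Fin.val_natCast, Fin.val_natCast, Nat.mod_mod_of_dvd _ dvd_rfl]

lemma master (hN : 4 ≤ N) (σ : Fin N → Bool) (l : Fin N) :
    transfer N a b c σ (Chi l)
      = (Rvertex a b c (σ l) false *
          (Rvertex a b c (σ (l + 1)) false * prodA a b c (chain σ l))).trace := by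
  set M : Fin N → Matrix (Fin 2) (Fin 2) ℂ := fun i => Rvertex a b c (σ i) (Chi l i) with hM
  have step1 : transfer N a b c σ (Chi l)
      = (((List.range N).map fun j : ℕ => M (j : Fin N)).prod).trace := by
    rw [transfer]
    rw [finRange_map_eq]
  rw [step1]
  have hlv : l.val ≤ N := le_of_lt l.isLt
  rw [← trace_rotate _ l.val (by simpa using hlv)]
  rw [rot_map (fun j : ℕ => M (j : Fin N)) N l.val]
  have hrw : (fun j : ℕ => M ((((l.val + j) % N : ℕ)) : Fin N)) = fun j : ℕ => M (site l j) := by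
    funext j
    rw [cast_mod]
    rfl
  rw [hrw]
  have hsplit : List.range N = List.range 2 ++ (List.range (N - 2)).map (2 + ·) := by
    conv_lhs => rw [show N = 2 + (N - 2) by omega]
    exact List.range_add
  rw [hsplit, List.map_append, List.prod_append]
  have h2 : (List.range 2).map (fun j : ℕ => M (site l j)) = [M (site l 0), M (site l 1)] := rfl
  rw [h2]
  have hz : M (site l 0) = Rvertex a b c (σ l) false := by
    rw [site_zero]
    show Rvertex a b c (σ l) (Chi l l) = _
    have h : Chi l l = false := by simp [Chi]
    rw [h]
  have ho : M (site l 1) = Rvertex a b c (σ (l + 1)) false := by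
    rw [site_one]
    show Rvertex a b c (σ (l + 1)) (Chi l (l + 1)) = _
    have h : Chi l (l + 1) = false := by simp [Chi]
    rw [h]
  have htail : (List.map (2 + ·) (List.range (N - 2))).map (fun j : ℕ => M (site l j))
      = (chain σ l).map fun s => Rvertex a b c s true := by
    rw [List.map_map, chain, List.map_map]
    apply List.map_congr_left
    intro j hj
    have hjlt : j < N - 2 := List.mem_range.mp hj
    have hchi : Chi l (site l (2 + j)) = true := by
      have h1 : site l (2 + j) ≠ l := by
        intro h
        have h' : site l (2 + j) = site l 0 := by rw [site_zero]; exact h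
        have := (site_inj l (by omega) (by omega)).mp h'
        omega
      have h2 : site l (2 + j) ≠ l + 1 := by
        intro h
        have h' : site l (2 + j) = site l 1 := by rw [site_one]; exact h
        have := (site_inj l (by omega) (by omega)).mp h'
        omega
      simp [Chi, h1, h2]
    show M (site l (2 + j)) = Rvertex a b c (σ (site l (2 + j))) true
    show Rvertex a b c (σ (site l (2 + j))) (Chi l (site l (2 + j))) = _
    rw [hchi]
  rw [htail]
  rw [hz, ho, List.prod_cons, List.prod_cons, List.prod_nil, mul_one, mul_assoc]
  rfl

end Master

end SixV
section Part3

namespace SixV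

variable {N : ℕ} [NeZero N]

lemma site_recover (l i : Fin N) : site l ((i - l).val) = i := by
  rw [site_cast, Fin.cast_val_eq_self, add_comm, sub_add_cancel]

lemma site_last (hN : 2 ≤ N) (l : Fin N) : site l (N - 1) = l - 1 := by
  rw [site_cast]
  have h : ((N - 1 : ℕ) : Fin N) = -1 := by
    have h0 : ((N - 1 : ℕ) : Fin N) + 1 = 0 := by
      have : ((N - 1 : ℕ) : Fin N) + ((1 : ℕ) : Fin N) = ((N - 1 + 1 : ℕ) : Fin N) := by
        push_cast
        ring
      rw [show ((1:ℕ) : Fin N) = 1 by push_cast; ring] at this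
      rw [this, show N - 1 + 1 = N by omega, Fin.natCast_self]
    exact eq_neg_of_add_eq_zero_left h0
  rw [h, sub_eq_add_neg]

lemma site_two (l : Fin N) : site l 2 = l + 1 + 1 := by
  rw [site_cast]
  norm_num
  rw [add_assoc, one_add_one_eq_two]

lemma fin_add_ne (x : Fin N) (k : ℕ) (h0 : 0 < k) (hk : k < N) : x + (k : Fin N) ≠ x := by
  intro h
  have h' : site x k = site x 0 := by rw [site_cast, site_zero]; exact h
  have := (site_inj x hk (by omega)).mp h'
  omega

/-- the middle part of the chain: sites `l+2, …, l+N-2` -/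
noncomputable def midlist (σ : Fin N → Bool) (l : Fin N) : List Bool :=
  (List.range (N - 3)).map fun j => σ (site l (2 + j))

lemma chain_decomp_last (hN : 4 ≤ N) (σ : Fin N → Bool) (l : Fin N) :
    chain σ l = midlist σ l ++ [σ (l - 1)] := by
  rw [chain, midlist, show N - 2 = (N - 3) + 1 by omega, List.range_succ, List.map_append]
  congr 1
  rw [List.map_singleton]
  congr 1
  rw [show 2 + (N - 3) = N - 1 by omega, site_last (by omega) l]

lemma chain_decomp_head (hN : 4 ≤ N) (σ : Fin N → Bool) (l : Fin N) :
    chain σ l = σ (l + 1 + 1) :: midlist σ (l + 1) := by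
  rw [chain, show N - 2 = (N - 3) + 1 by omega, List.range_succ_eq_map, List.map_cons,
    List.map_map, midlist]
  congr 1
  · rw [show (2 : ℕ) + 0 = 2 by ring, site_two]
  · apply List.map_congr_left
    intro j _
    simp only [Function.comp]
    congr 1
    rw [site_succ, show (1 : ℕ) + (2 + j) = 2 + Nat.succ j by omega]

/-- the trace of the rotated local product at `l` -/
noncomputable def trL (a b c : ℂ) (σ : Fin N → Bool) (l : Fin N) : ℂ :=
  (Rvertex a b c (σ l) false *
    (Rvertex a b c (σ (l + 1)) false * prodA a b c (chain σ l))).trace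

variable (a b c : ℂ)

lemma trL_tt (σ : Fin N → Bool) (l : Fin N) (h0 : σ l = true) (h1 : σ (l + 1) = true) :
    trL a b c σ l = 0 := by
  rw [trL, h0, h1, tr_tt]

lemma trL_zero_of_prod_zero (σ : Fin N → Bool) (l : Fin N)
    (h : prodA a b c (chain σ l) = 0) : trL a b c σ l = 0 := by
  rw [trL, h, mul_zero, mul_zero, Matrix.trace_zero]

/-- if `σ` is down at `l, l+1` but is not `Chi l`, the trace vanishes -/
lemma trL_ff (hN : 4 ≤ N) (σ : Fin N → Bool) (l : Fin N)
    (h0 : σ l = false) (h1 : σ (l + 1) = false) (hne : σ ≠ Chi l) :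
    trL a b c σ l = 0 := by
  have hi : ∃ i, σ i ≠ Chi l i := by
    by_contra h
    push_neg at h
    exact hne (funext h)
  obtain ⟨i, hi⟩ := hi
  set k : ℕ := (i - l).val with hk
  have hik : site l k = i := site_recover l i
  have hkN : k < N := (i - l).isLt
  have hk0 : k ≠ 0 := by
    intro h
    rw [h, site_zero] at hik
    rw [← hik] at hi
    simp [Chi, h0] at hi
  have hk1 : k ≠ 1 := by
    intro h
    rw [h, site_one] at hik
    rw [← hik] at hi
    simp [Chi, h1] at hi
  have hσi : σ i = false := by
    have hchi : Chi l i = true := by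
      rw [← hik]
      have hl : site l k ≠ l := by
        intro h
        have h' : site l k = site l 0 := by rw [site_zero]; exact h
        exact hk0 ((site_inj l hkN (by omega)).mp h')
      have hl1 : site l k ≠ l + 1 := by
        intro h
        have h' : site l k = site l 1 := by rw [site_one]; exact h
        exact hk1 ((site_inj l hkN (by omega)).mp h')
      simp [Chi, hl, hl1]
    rw [hchi] at hi
    simpa using hi
  have hjlt : k - 2 < (chain σ l).length := by rw [chain_length]; omega
  have hget : (chain σ l).get ⟨k - 2, hjlt⟩ = false := by
    rw [chain_get, show 2 + (k - 2) = k by omega, hik, hσi]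
  obtain ⟨z, hz⟩ := prodA_low a b c (chain σ l)
    ⟨false, List.mem_iff_get.mpr ⟨⟨k - 2, hjlt⟩, hget⟩, rfl⟩
  rw [trL, h0, h1, hz, tr_ff_low]

end SixV

end Part3
section Part4

namespace SixV

variable {N : ℕ} [NeZero N]

lemma neg_one_pow_mod (hNeven : Even N) (x : ℕ) : (-1 : ℂ) ^ (x % N) = (-1 : ℂ) ^ x := by
  conv_rhs => rw [← Nat.div_add_mod x N]
  rw [pow_add, pow_mul, Even.neg_one_pow hNeven, one_pow, one_mul]

lemma fin_one_val (hN : 2 ≤ N) : ((1 : Fin N)).val = 1 := by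
  rw [Fin.val_one']
  exact Nat.mod_eq_of_lt (by omega)

lemma sign_pred (hNeven : Even N) (hN : 2 ≤ N) (m : Fin N) :
    (-1 : ℂ) ^ ((m - 1).val + 1) = -(-1 : ℂ) ^ (m.val + 1) := by
  have hv : (m - 1).val = (N - 1 + m.val) % N := by
    rw [Fin.sub_def]
    simp only [fin_one_val hN]
  rw [hv, pow_succ, pow_succ, neg_one_pow_mod hNeven, pow_add]
  have hodd : Odd (N - 1) := Nat.Even.sub_odd (by omega) hNeven odd_one
  rw [Odd.neg_one_pow hodd]
  ring

lemma sign_succ (hNeven : Even N) (hN : 2 ≤ N) (m : Fin N) :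
    (-1 : ℂ) ^ ((m + 1).val + 1) = -(-1 : ℂ) ^ (m.val + 1) := by
  have hv : (m + 1).val = (m.val + 1) % N := by
    rw [Fin.val_add, fin_one_val hN]
  rw [hv, pow_succ, pow_succ, neg_one_pow_mod hNeven, pow_succ]
  ring

lemma chi_apply_self (l : Fin N) : Chi l l = false := by simp [Chi]

lemma chi_apply_succ (l : Fin N) : Chi l (l + 1) = false := by simp [Chi]

lemma chi_apply_other (l i : Fin N) (h1 : i ≠ l) (h2 : i ≠ l + 1) : Chi l i = true := by
  simp [Chi, h1, h2]

lemma fin_succ_ne_self (hN : 4 ≤ N) (x : Fin N) : x + 1 ≠ x := by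
  have h : (1 : Fin N) = ((1 : ℕ) : Fin N) := by push_cast; ring
  rw [h]
  exact fin_add_ne x 1 (by omega) (by omega)

lemma fin_two_ne_self (hN : 4 ≤ N) (x : Fin N) : x + 1 + 1 ≠ x := by
  have h : x + 1 + 1 = site x 2 := (site_two x).symm
  rw [h]
  intro hc
  have h' : site x 2 = site x 0 := by rw [site_zero]; exact hc
  have := (site_inj x (by omega) (by omega)).mp h'
  omega

lemma fin_pred_ne_self (hN : 4 ≤ N) (x : Fin N) : x - 1 ≠ x := by
  intro hc
  have h := congrArg (· + 1) hc
  simp only [sub_add_cancel] at h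
  exact fin_succ_ne_self hN x h.symm

lemma fin_pred_ne_succ (hN : 4 ≤ N) (x : Fin N) : x - 1 ≠ x + 1 := by
  intro hc
  have h := congrArg (· + 1) hc
  simp only [sub_add_cancel] at h
  exact fin_two_ne_self hN x h.symm

lemma chi_eq_iff (hN : 4 ≤ N) (x l : Fin N) : Chi x = Chi l ↔ l = x := by
  constructor
  · intro h
    have h1 : Chi x l = false := by rw [h]; exact chi_apply_self l
    by_contra hne
    have h2 : l = x + 1 := by
      by_contra h2
      rw [chi_apply_other x l hne h2] at h1
      exact Bool.true_eq_false.mp h1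
    have h3 : Chi x x = false := chi_apply_self x
    rw [h, h2] at h3
    have h4 : Chi (x + 1) x = true := by
      apply chi_apply_other
      · exact fun hc => (fin_succ_ne_self hN x) hc.symm
      · exact fun hc => (fin_two_ne_self hN x) hc.symm
    rw [h4] at h3
    exact Bool.true_eq_false.mp h3
  · rintro rfl; rfl

lemma extra_false (σ : Fin N → Bool) (l : Fin N) (h0 : σ l = false)
    (h1 : σ (l + 1) = false) (hne : σ ≠ Chi l) :
    ∃ i, σ i = false ∧ i ≠ l ∧ i ≠ l + 1 := by
  have hi : ∃ i, σ i ≠ Chi l i := by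
    by_contra h
    push_neg at h
    exact hne (funext h)
  obtain ⟨i, hi⟩ := hi
  have h2 : i ≠ l := by rintro rfl; rw [chi_apply_self] at hi; exact hi h0
  have h3 : i ≠ l + 1 := by rintro rfl; rw [chi_apply_succ] at hi; exact hi h1
  refine ⟨i, ?_, h2, h3⟩
  rw [chi_apply_other l i h2 h3] at hi
  simpa using hi

lemma site_N (x : Fin N) : site x N = x := by
  rw [← site_mod, Nat.mod_self, site_zero]

variable (a b c : ℂ)

/-- evaluation: σ = Chi x at l = x -/
lemma trL_chi_self (hN : 4 ≤ N) (x : Fin N) :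
    trL a b c (Chi x) x = b * b * a ^ (N - 2) + a * a * b ^ (N - 2) := by
  have hall : ∀ s ∈ chain (Chi x) x, s = true := by
    intro s hs
    obtain ⟨j, hj, rfl⟩ := List.mem_map.mp hs
    have hjlt : j < N - 2 := List.mem_range.mp hj
    apply chi_apply_other
    · intro hc
      have h' : site x (2 + j) = site x 0 := by rw [site_zero]; exact hc
      have := (site_inj x (by omega) (by omega)).mp h'
      omega
    · intro hc
      have h' : site x (2 + j) = site x 1 := by rw [site_one]; exact hc
      have := (site_inj x (by omega) (by omega)).mp h'
      omega
  have hp := prodA_all_true a b c (chain (Chi x) x) hall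
  rw [chain_length] at hp
  rw [trL, chi_apply_self, chi_apply_succ, hp, tr_ff_diag]

/-- evaluation: σ = Chi x at l = x - 1 -/
lemma trL_chi_pred (hN : 4 ≤ N) (x : Fin N) :
    trL a b c (Chi x) (x - 1) = c ^ 2 * a ^ (N - 2) := by
  have hx1 : (x - 1) + 1 = x := sub_add_cancel x 1
  have hsite : ∀ k : ℕ, site (x - 1) (1 + k) = site x k := by
    intro k
    conv_rhs => rw [← hx1]
    rw [site_succ]
  have hv0 : Chi x (x - 1) = true :=
    chi_apply_other x (x - 1) (fin_pred_ne_self hN x) (fin_pred_ne_succ hN x)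
  have hget : ∀ i (h : i < (chain (Chi x) (x - 1)).length),
      (chain (Chi x) (x - 1)).get ⟨i, h⟩ = decide (i ≠ 0) := by
    intro i hi
    have hilt : i < N - 2 := by rw [chain_length] at hi; exact hi
    rw [chain_get, show 2 + i = 1 + (1 + i) by omega, hsite]
    by_cases h : i = 0
    · subst h
      rw [show (1 : ℕ) + 0 = 1 by omega, site_one, chi_apply_succ]
      simp
    · have hne0 : site x (1 + i) ≠ x := by
        intro hc
        have h' : site x (1 + i) = site x 0 := by rw [site_zero]; exact hc
        have := (site_inj x (by omega) (by omega)).mp h'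
        omega
      have hne1 : site x (1 + i) ≠ x + 1 := by
        intro hc
        have h' : site x (1 + i) = site x 1 := by rw [site_one]; exact hc
        have := (site_inj x (by omega) (by omega)).mp h'
        omega
      rw [chi_apply_other x _ hne0 hne1]
      simp [h]
  have hp := prodA_one_false a b c (chain (Chi x) (x - 1)) 0
    (by rw [chain_length]; omega) hget
  rw [chain_length] at hp
  rw [trL, hx1, hv0, chi_apply_self, hp, tr_tf_low]
  rw [show N - 2 - 1 - 0 = N - 3 by omega, show N - 2 = N - 3 + 1 by omega, pow_succ]
  ring

/-- evaluation: σ = Chi x at l = x + 1 -/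
lemma trL_chi_succ (hN : 4 ≤ N) (x : Fin N) :
    trL a b c (Chi x) (x + 1) = c ^ 2 * b ^ (N - 2) := by
  have hv1 : Chi x (x + 1 + 1) = true := by
    apply chi_apply_other
    · exact fin_two_ne_self hN x
    · exact fin_succ_ne_self hN (x + 1)
  have hget : ∀ i (h : i < (chain (Chi x) (x + 1)).length),
      (chain (Chi x) (x + 1)).get ⟨i, h⟩ = decide (i ≠ N - 3) := by
    intro i hi
    have hilt : i < N - 2 := by rw [chain_length] at hi; exact hi
    rw [chain_get, site_succ, show 1 + (2 + i) = 3 + i by omega]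
    by_cases h : i = N - 3
    · subst h
      rw [show 3 + (N - 3) = N by omega, site_N, chi_apply_self]
      simp
    · have hne0 : site x (3 + i) ≠ x := by
        intro hc
        have h' : site x (3 + i) = site x 0 := by rw [site_zero]; exact hc
        have := (site_inj x (by omega) (by omega)).mp h'
        omega
      have hne1 : site x (3 + i) ≠ x + 1 := by
        intro hc
        have h' : site x (3 + i) = site x 1 := by rw [site_one]; exact hc
        have := (site_inj x (by omega) (by omega)).mp h'
        omega
      rw [chi_apply_other x _ hne0 hne1]
      simp [h]
  have hp := prodA_one_false a b c (chain (Chi x) (x + 1)) (N - 3)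
    (by rw [chain_length]; omega) hget
  rw [chain_length] at hp
  rw [trL, chi_apply_succ, hv1, hp, tr_ft_low]
  rw [show N - 2 - 1 - (N - 3) = 0 by omega, pow_zero,
    show N - 2 = N - 3 + 1 by omega, pow_succ]
  ring

/-- evaluation: σ = Chi x away from x-1, x, x+1 -/
lemma trL_chi_other (hN : 4 ≤ N) (x l : Fin N)
    (hl1 : l ≠ x - 1) (hl2 : l ≠ x) (hl3 : l ≠ x + 1) :
    trL a b c (Chi x) l = 0 := by
  apply trL_tt
  · exact chi_apply_other x l hl2 hl3
  · apply chi_apply_other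
    · intro hc
      exact hl1 (eq_sub_of_add_eq hc)
    · intro hc
      exact hl2 (add_right_cancel hc)

end SixV

end Part4
section Part5

namespace SixV

variable {N : ℕ} [NeZero N] (a b c : ℂ)

lemma RTT : Rvertex a b c true true = !![a, 0; 0, b] := rfl

lemma prodA_single_true : prodA a b c [true] = !![a, 0; 0, b] := by
  rw [prodA]
  simp [RTT]

/-- the two-false annihilation at `l = m - 1` when `σ` is down at `m, m+1` and up at `m-1` -/
lemma pair_cancel (hN : 4 ≤ N) (hNeven : Even N) (σ : Fin N → Bool)
    (hσ : ∀ x, σ ≠ Chi x) (m : Fin N) (hm : σ m = false) :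
    (-1 : ℂ) ^ ((m - 1).val + 1) * trL a b c σ (m - 1) +
      (-1 : ℂ) ^ (m.val + 1) * trL a b c σ m = 0 := by
  have hum : (m - 1) + 1 = m := sub_add_cancel m 1
  by_cases h1 : σ (m + 1) = false
  · -- case (b): σ down at m, m+1
    have hTm : trL a b c σ m = 0 := trL_ff a b c hN σ m hm h1 (hσ m)
    have hTu : trL a b c σ (m - 1) = 0 := by
      by_cases hu : σ (m - 1) = false
      · exact trL_ff a b c hN σ (m - 1) hu (by rw [hum]; exact hm) (hσ (m - 1))
      · -- σ (m-1) = true : two falses in the chain at m-1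
        apply trL_zero_of_prod_zero
        obtain ⟨i, hif, him, him1⟩ := extra_false σ m hm h1 (hσ m)
        have hiu : i ≠ m - 1 := by
          intro hc
          rw [hc] at hif
          exact hu hif
        set k : ℕ := (i - (m - 1)).val with hk
        have hik : site (m - 1) k = i := site_recover (m - 1) i
        have hkN : k < N := (i - (m - 1)).isLt
        have hk0 : k ≠ 0 := by
          intro h; rw [h, site_zero] at hik; exact hiu hik.symm
        have hk1 : k ≠ 1 := by
          intro h; rw [h, site_one, hum] at hik; exact him hik.symm
        have hk2 : k ≠ 2 := by
          intro h; rw [h, site_two, hum] at hik; exact him1 hik.symm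
        have hj2 : k - 2 < (chain σ (m - 1)).length := by rw [chain_length]; omega
        have hj1 : (0 : ℕ) < (chain σ (m - 1)).length := by rw [chain_length]; omega
        have hg2 : (chain σ (m - 1)).get ⟨k - 2, hj2⟩ = false := by
          rw [chain_get, show 2 + (k - 2) = k by omega, hik, hif]
        have hg1 : (chain σ (m - 1)).get ⟨0, hj1⟩ = false := by
          rw [chain_get, site_two, hum, h1]
        exact prodA_two_false a b c _ 0 (k - 2) (by omega) hj2 hg1 hg2
    rw [hTm, hTu]
    ring
  · -- σ (m+1) = true
    by_cases hu : σ (m - 1) = false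
    · -- case (c)
      have hTu : trL a b c σ (m - 1) = 0 :=
        trL_ff a b c hN σ (m - 1) hu (by rw [hum]; exact hm) (hσ (m - 1))
      have hTm : trL a b c σ m = 0 := by
        apply trL_zero_of_prod_zero
        obtain ⟨i, hif, hiu, him⟩ := extra_false σ (m - 1) hu (by rw [hum]; exact hm)
          (hσ (m - 1))
        rw [hum] at him
        have him1 : i ≠ m + 1 := by
          intro hc; rw [hc] at hif; rw [hif] at h1; exact h1 rfl
        set k : ℕ := (i - m).val with hk
        have hik : site m k = i := site_recover m i
        have hkN : k < N := (i - m).isLt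
        have hk0 : k ≠ 0 := by
          intro h; rw [h, site_zero] at hik; exact him hik.symm
        have hk1 : k ≠ 1 := by
          intro h; rw [h, site_one] at hik; exact him1 hik.symm
        have hkl : k ≠ N - 1 := by
          intro h
          rw [h, site_last (by omega) m] at hik
          exact hiu hik.symm
        have hj2 : N - 3 < (chain σ m).length := by rw [chain_length]; omega
        have hj1lt : k - 2 < N - 3 := by omega
        have hjlen : k - 2 < (chain σ m).length := by rw [chain_length]; omega
        have hg1 : (chain σ m).get ⟨k - 2, hjlen⟩ = false := by
          rw [chain_get, show 2 + (k - 2) = k by omega, hik, hif]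
        have hg2 : (chain σ m).get ⟨N - 3, hj2⟩ = false := by
          rw [chain_get, show 2 + (N - 3) = N - 1 by omega, site_last (by omega) m, hu]
        exact prodA_two_false a b c _ (k - 2) (N - 3) hj1lt hj2 hg1 hg2
      rw [hTm, hTu]
      ring
    · -- case (a): σ (m-1) = true, σ m = false, σ (m+1) = true
      have hu' : σ (m - 1) = true := by
        cases hval : σ (m - 1)
        · exact absurd hval hu
        · rfl
      have h1' : σ (m + 1) = true := by
        cases hval : σ (m + 1)
        · exact absurd hval h1
        · rfl
      have hchainm : chain σ m = midlist σ m ++ [σ (m - 1)] := chain_decomp_last hN σ m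
      have hchainu : chain σ (m - 1) = σ (m + 1) :: midlist σ m := by
        have h := chain_decomp_head hN σ (m - 1)
        rw [hum] at h
        exact h
      by_cases hmid : ∀ s ∈ midlist σ m, s = true
      · -- middle all up : both traces vanish
        have hdiag := prodA_all_true a b c (midlist σ m) hmid
        have hTm : trL a b c σ m = 0 := by
          have hp : prodA a b c (chain σ m)
              = !![a ^ (midlist σ m).length * a, 0; 0, b ^ (midlist σ m).length * b] := by
            rw [hchainm, prodA_append, hdiag, hu', prodA_single_true, Matrix.mul_fin_two]
            norm_num
          rw [trL, hm, h1', hp, tr_ft_diag]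
        have hTu : trL a b c σ (m - 1) = 0 := by
          have hp : prodA a b c (chain σ (m - 1))
              = !![a * a ^ (midlist σ m).length, 0; 0, b * b ^ (midlist σ m).length] := by
            rw [hchainu, prodA_cons, hdiag, h1', RTT, Matrix.mul_fin_two]
            norm_num
          rw [trL, hum, hu', hm, hp, tr_tf_diag]
        rw [hTm, hTu]
        ring
      · -- a down arrow in the middle : the two traces cancel
        have hex : ∃ s ∈ midlist σ m, s = false := by
          push_neg at hmid
          obtain ⟨s, hs, hs'⟩ := hmid
          exact ⟨s, hs, by simpa using hs'⟩
        obtain ⟨w, hw⟩ := prodA_low a b c (midlist σ m) hex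
        have hTm : trL a b c σ m = b * c * (w * a) := by
          have hp : prodA a b c (chain σ m) = !![0, 0; w * a, 0] := by
            rw [hchainm, prodA_append, hw, hu', prodA_single_true, Matrix.mul_fin_two]
            norm_num
          rw [trL, hm, h1', hp, tr_ft_low]
        have hTu : trL a b c σ (m - 1) = a * c * (b * w) := by
          have hp : prodA a b c (chain σ (m - 1)) = !![0, 0; b * w, 0] := by
            rw [hchainu, prodA_cons, hw, h1', RTT, Matrix.mul_fin_two]
            norm_num
          rw [trL, hum, hu', hm, hp, tr_tf_low]
        rw [hTm, hTu, sign_pred hNeven (by omega) m]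
        ring

end SixV

end Part5
/-- For even `N ≥ 4`, the `n = 2` bound-pair state
`ψ = Σ_{l=1}^{N} (−1)^l |l, l+1⟩` (positions mod `N`; here sites are labelled by
`Fin N`, site `l ∈ {1,…,N}` corresponding to `l − 1 ∈ Fin N`) is an eigenvector of
the transfer matrix with eigenvalue
`Λ = a²b²(a^(N−4) + b^(N−4)) − c²(a^(N−2) + b^(N−2))`. -/
theorem n2_boundPair_eigenvector (N : ℕ) [NeZero N] (hN : 4 ≤ N) (hNeven : Even N)
    (a b c : ℂ) :
    (transfer N a b c).mulVec
        (fun σ => ∑ l : Fin N, (-1 : ℂ) ^ ((l : ℕ) + 1) * ket {l, l + 1} σ) =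
      fun σ =>
        (a^2*b^2*(a^(N-4) + b^(N-4)) - c^2*(a^(N-2) + b^(N-2))) *
          ∑ l : Fin N, (-1 : ℂ) ^ ((l : ℕ) + 1) * ket {l, l + 1} σ := by
  funext σ
  have hket : ∀ (l : Fin N) (τ : Fin N → Bool),
      ket {l, l + 1} τ = if τ = SixV.Chi l then 1 else 0 := fun _ _ => rfl
  have hmaster : ∀ l : Fin N, transfer N a b c σ (SixV.Chi l) = SixV.trL a b c σ l :=
    fun l => SixV.master (a := a) (b := b) (c := c) hN σ l
  have hmv : (transfer N a b c).mulVec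
      (fun σ' => ∑ l : Fin N, (-1 : ℂ) ^ ((l : ℕ) + 1) * ket {l, l + 1} σ') σ
      = ∑ l : Fin N, (-1 : ℂ) ^ ((l : ℕ) + 1) * transfer N a b c σ (SixV.Chi l) := by
    rw [Matrix.mulVec]
    simp only [dotProduct, hket, Finset.mul_sum]
    rw [Finset.sum_comm]
    apply Finset.sum_congr rfl
    intro l _
    have hsummand : ∀ τ : Fin N → Bool,
        transfer N a b c σ τ * ((-1 : ℂ) ^ ((l : ℕ) + 1) * (if τ = SixV.Chi l then 1 else 0))
          = if τ = SixV.Chi l then (-1 : ℂ) ^ ((l : ℕ) + 1) * transfer N a b c σ τ else 0 := by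
      intro τ
      split_ifs <;> ring
    rw [Finset.sum_congr rfl (fun τ _ => hsummand τ), Finset.sum_ite_eq' Finset.univ]
    simp
  rw [hmv]
  simp only [hmaster, hket]
  by_cases hσ : ∃ x, σ = SixV.Chi x
  · obtain ⟨x, rfl⟩ := hσ
    have hR : ∑ l : Fin N, (-1 : ℂ) ^ ((l : ℕ) + 1) * (if SixV.Chi x = SixV.Chi l then 1 else 0)
        = (-1 : ℂ) ^ ((x : ℕ) + 1) := by
      have h1 : ∀ l : Fin N,
          (-1 : ℂ) ^ ((l : ℕ) + 1) * (if SixV.Chi x = SixV.Chi l then 1 else 0)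
            = if l = x then (-1 : ℂ) ^ ((l : ℕ) + 1) else 0 := by
        intro l
        simp only [SixV.chi_eq_iff hN]
        split_ifs <;> ring
      rw [Finset.sum_congr rfl (fun l _ => h1 l), Finset.sum_ite_eq' Finset.univ x]
      simp
    have hL : ∑ l : Fin N, (-1 : ℂ) ^ ((l : ℕ) + 1) * SixV.trL a b c (SixV.Chi x) l
        = ∑ l ∈ ({x - 1, x, x + 1} : Finset (Fin N)),
            (-1 : ℂ) ^ ((l : ℕ) + 1) * SixV.trL a b c (SixV.Chi x) l := by
      symm
      apply Finset.sum_subset (Finset.subset_univ _)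
      intro l _ hl
      simp only [Finset.mem_insert, Finset.mem_singleton] at hl
      push_neg at hl
      rw [SixV.trL_chi_other a b c hN x l hl.1 hl.2.1 hl.2.2, mul_zero]
    rw [hL]
    have hd1 : (x - 1) ∉ ({x, x + 1} : Finset (Fin N)) := by
      simp only [Finset.mem_insert, Finset.mem_singleton]
      push_neg
      exact ⟨SixV.fin_pred_ne_self hN x, SixV.fin_pred_ne_succ hN x⟩
    have hd2 : x ∉ ({x + 1} : Finset (Fin N)) := by
      simp only [Finset.mem_singleton]
      exact fun h => SixV.fin_succ_ne_self hN x h.symm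
    rw [Finset.sum_insert hd1, Finset.sum_insert hd2, Finset.sum_singleton]
    rw [SixV.trL_chi_pred a b c hN x, SixV.trL_chi_self a b c hN x,
      SixV.trL_chi_succ a b c hN x, SixV.sign_pred hNeven (by omega) x,
      SixV.sign_succ hNeven (by omega) x, hR]
    have ha : a ^ (N - 2) = a ^ (N - 4) * a ^ 2 := by rw [← pow_add]; congr 1; omega
    have hb : b ^ (N - 2) = b ^ (N - 4) * b ^ 2 := by rw [← pow_add]; congr 1; omega
    rw [ha, hb]
    ring
  · push_neg at hσ
    have hR : ∀ l : Fin N, (if σ = SixV.Chi l then (1 : ℂ) else 0) = 0 := by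
      intro l; rw [if_neg (hσ l)]
    set f : Fin N → ℂ := fun l => (-1 : ℂ) ^ ((l : ℕ) + 1) * SixV.trL a b c σ l with hf
    have key : ∑ l : Fin N, f l = 0 := by
      have hsplit : ∀ l : Fin N,
          f l = (if σ l = false then f l else 0) + (if σ l = false then 0 else f l) := by
        intro l; split_ifs <;> ring
      rw [Finset.sum_congr rfl (fun l _ => hsplit l), Finset.sum_add_distrib]
      have hv : ∀ l : Fin N, (if σ l = false then 0 else f l)
          = (fun m => if σ m = false then f (m - 1) else 0) (l + 1) := by
        intro l
        simp only [add_sub_cancel_right]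
        cases hl : σ l with
        | false =>
            cases hl1 : σ (l + 1) with
            | false =>
                have hz : f l = 0 := by
                  rw [hf]
                  simp only []
                  rw [SixV.trL_ff a b c hN σ l hl hl1 (hσ l), mul_zero]
                simp [hz]
            | true => simp
        | true =>
            cases hl1 : σ (l + 1) with
            | false => simp
            | true =>
                have hz : f l = 0 := by
                  rw [hf]
                  simp only []
                  rw [SixV.trL_tt a b c σ l hl hl1, mul_zero]
                simp [hz]
      have hsum2 : (∑ l : Fin N, if σ l = false then 0 else f l)
          = ∑ m : Fin N, (if σ m = false then f (m - 1) else 0) := by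
        rw [Finset.sum_congr rfl (fun l _ => hv l)]
        exact Equiv.sum_comp (Equiv.addRight (1 : Fin N))
          (fun m => if σ m = false then f (m - 1) else 0)
      rw [hsum2, ← Finset.sum_add_distrib]
      apply Finset.sum_eq_zero
      intro m _
      by_cases hm : σ m = false
      · rw [if_pos hm, if_pos hm]
        have hpc := SixV.pair_cancel a b c hN hNeven σ hσ m hm
        rw [hf]
        simp only []
        linear_combination hpc
      · rw [if_neg hm, if_neg hm, add_zero]
    rw [key]
    simp [hR]
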